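/- For all integers Δ ≥ 1 and t ≥ 1, the disjoint union of t copies of the complete bipartite graph K_{Δ,Δ} has edge Roman domination number exactly (2Δ − 1)·t. In particular, for Δ ≥ 2 and t sufficiently large, this exceeds ((2Δ − 2)/(2Δ − 1))·n + 2/(2Δ − 1) with n = 2Δt, showing the connectivity hypothesis in the bound γ'_R(G) ≤ ((2Δ − 2)/(2Δ − 1))·n + 2/(2Δ − 1) for connected graphs of maximum degree Δ is necessary. -/

import Mathlib

open Finset SimpleGraph

/-- An edge Roman dominating function: values in {0,1,2} on edges (0 elsewhere),
and every edge with value 0 is adjacent to a distinct edge with value 2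
sharing an endpoint with it. -/
def EdgeRDF {V : Type*} (G : SimpleGraph V) (f : Sym2 V → ℕ) : Prop :=
  (∀ e, f e ≤ 2) ∧ (∀ e, e ∉ G.edgeSet → f e = 0) ∧
  (∀ e ∈ G.edgeSet, f e = 0 →
    ∃ e' ∈ G.edgeSet, f e' = 2 ∧ e' ≠ e ∧ ∃ v, v ∈ e ∧ v ∈ e')

/-- The edge Roman domination number: the minimum weight of an
edge Roman dominating function. -/
noncomputable def edgeRomanNumber (V : Type*) [Fintype V] [DecidableEq V]
    (G : SimpleGraph V) : ℕ :=
  sInf {w | ∃ f : Sym2 V → ℕ, EdgeRDF G f ∧ w = ∑ e : Sym2 V, f e}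


/-- `tKdd d t` is the disjoint union of `t` copies of the complete bipartite
graph `K_{d,d}`. -/
def tKdd (d t : ℕ) : SimpleGraph (Fin t × (Fin d ⊕ Fin d)) :=
  SimpleGraph.fromRel fun a b =>
    a.1 = b.1 ∧ ∃ x y, a.2 = Sum.inl x ∧ b.2 = Sum.inr y

/-- The edge of the `i`-th copy of `K_{Δ,Δ}` joining left vertex `p.1` to right
vertex `p.2`. -/
def psi (Δ t : ℕ) (i : Fin t) (p : Fin Δ × Fin Δ) :
    Sym2 (Fin t × (Fin Δ ⊕ Fin Δ)) :=
  s((i, Sum.inl p.1), (i, Sum.inr p.2))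

lemma psi_inj {Δ t : ℕ} {i j : Fin t} {p q : Fin Δ × Fin Δ} :
    psi Δ t i p = psi Δ t j q ↔ i = j ∧ p = q := by
  simp [psi, Sym2.eq_iff, Prod.ext_iff]; aesop

lemma mem_tKdd' {Δ t : ℕ} (e : Sym2 (Fin t × (Fin Δ ⊕ Fin Δ))) :
    e ∈ (tKdd Δ t).edgeSet ↔ ∃ i p, e = psi Δ t i p := by
  induction e using Sym2.ind with
  | _ a b =>
    rw [SimpleGraph.mem_edgeSet, tKdd, SimpleGraph.fromRel_adj]
    constructor
    · rintro ⟨hne, ⟨h1, x, y, hx, hy⟩ | ⟨h1, x, y, hx, hy⟩⟩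
      · exact ⟨a.1, (x, y), by
          rw [show a = (a.1, Sum.inl x) from Prod.ext rfl hx,
            show b = (a.1, Sum.inr y) from Prod.ext h1.symm hy]; rfl⟩
      · exact ⟨b.1, (x, y), by
          rw [show b = (b.1, Sum.inl x) from Prod.ext rfl hx,
            show a = (b.1, Sum.inr y) from Prod.ext h1.symm hy, Sym2.eq_swap]; rfl⟩
    · rintro ⟨i, p, hp⟩
      rw [psi, Sym2.eq_iff] at hp
      rcases hp with ⟨ha, hb⟩ | ⟨ha, hb⟩
      · subst ha; subst hb
        exact ⟨by simp [Prod.ext_iff], Or.inl ⟨rfl, p.1, p.2, rfl, rfl⟩⟩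
      · subst ha; subst hb
        exact ⟨by simp [Prod.ext_iff], Or.inr ⟨rfl, p.1, p.2, rfl, rfl⟩⟩

/-- The counting lemma for a single copy of `K_{Δ,Δ}`: any `{0,1,2}`-valued
function on the edge grid in which every `0` shares a row or column with a `2`
has total weight at least `2Δ - 1`. -/
lemma key_count {Δ : ℕ} (hΔ : 1 ≤ Δ) (g : Fin Δ × Fin Δ → ℕ)
    (hdom : ∀ p, g p = 0 → ∃ q, g q = 2 ∧ (q.1 = p.1 ∨ q.2 = p.2)) :
    2 * Δ - 1 ≤ ∑ p, g p := by
  classical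
  set A : Finset (Fin Δ × Fin Δ) := univ.filter (fun p => g p = 2) with hA
  have hsumA : ∑ p ∈ A, g p = 2 * A.card := by
    rw [Finset.sum_congr rfl (fun p hp => (Finset.mem_filter.mp hp).2),
      Finset.sum_const, smul_eq_mul, mul_comm]
  by_cases hk : Δ ≤ A.card
  · calc 2 * Δ - 1 ≤ 2 * A.card := by omega
      _ = ∑ p ∈ A, g p := hsumA.symm
      _ ≤ ∑ p, g p := Finset.sum_le_sum_of_subset (Finset.subset_univ A)
  · push_neg at hk
    set X := A.image Prod.fst with hX
    set Y := A.image Prod.snd with hY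
    set B := (univ \ X) ×ˢ (univ \ Y) with hB
    have hAB : Disjoint A B := by
      rw [Finset.disjoint_left]
      intro p hpA hpB
      rw [hB, Finset.mem_product, Finset.mem_sdiff] at hpB
      exact hpB.1.2 (Finset.mem_image.mpr ⟨p, hpA, rfl⟩)
    have hB1 : ∀ p ∈ B, 1 ≤ g p := by
      intro p hp
      by_contra h
      obtain ⟨q, hq2, hshare⟩ := hdom p (by omega)
      have hqA : q ∈ A := Finset.mem_filter.mpr ⟨Finset.mem_univ _, hq2⟩
      rw [hB, Finset.mem_product, Finset.mem_sdiff, Finset.mem_sdiff] at hp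
      rcases hshare with h' | h'
      · exact hp.1.2 (Finset.mem_image.mpr ⟨q, hqA, h'⟩)
      · exact hp.2.2 (Finset.mem_image.mpr ⟨q, hqA, h'⟩)
    have hcardB : (Δ - A.card) * (Δ - A.card) ≤ B.card := by
      have hXc : X.card ≤ A.card := Finset.card_image_le
      have hYc : Y.card ≤ A.card := Finset.card_image_le
      have : B.card = (Δ - X.card) * (Δ - Y.card) := by
        rw [hB, Finset.card_product, Finset.card_sdiff_of_subset (Finset.subset_univ _),
          Finset.card_sdiff_of_subset (Finset.subset_univ _), Finset.card_univ, Fintype.card_fin]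
      rw [this]
      exact Nat.mul_le_mul (Nat.sub_le_sub_left hXc Δ) (Nat.sub_le_sub_left hYc Δ)
    have hsumB : B.card ≤ ∑ p ∈ B, g p := by
      calc B.card = B.card • 1 := by simp
        _ ≤ ∑ p ∈ B, g p := Finset.card_nsmul_le_sum B g 1 hB1
    have Hmain : 2 * A.card + (Δ - A.card) * (Δ - A.card) ≤ ∑ p, g p := by
      calc 2 * A.card + (Δ - A.card) * (Δ - A.card)
          ≤ ∑ p ∈ A, g p + ∑ p ∈ B, g p := by
            rw [hsumA]; exact Nat.add_le_add_left (le_trans hcardB hsumB) _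
        _ = ∑ p ∈ A ∪ B, g p := (Finset.sum_union hAB).symm
        _ ≤ ∑ p, g p := Finset.sum_le_sum_of_subset (Finset.subset_univ _)
    obtain ⟨m', hm'⟩ : ∃ m', Δ - A.card = m' + 1 := ⟨Δ - A.card - 1, by omega⟩
    calc 2 * Δ - 1 = 2 * A.card + (2 * m' + 1) := by omega
      _ ≤ 2 * A.card + (m' * m' + 2 * m' + 1) :=
          Nat.add_le_add_left (Nat.le_add_left _ _) _
      _ = 2 * A.card + (m' + 1) * (m' + 1) := by ring
      _ ≤ ∑ p, g p := by rw [← hm']; exact Hmain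

/-- The weight assigned to the diagonal edge through left/right vertex `x`. -/
def wt (Δ : ℕ) (x : Fin Δ) : ℕ := if x.val + 1 = Δ then 1 else 2

/-- The optimal edge Roman dominating function on `t` copies of `K_{Δ,Δ}`:
weight `2` on each diagonal edge except the last, weight `1` on the last. -/
def fup (Δ t : ℕ) (e : Sym2 (Fin t × (Fin Δ ⊕ Fin Δ))) : ℕ :=
  ∑ q : Fin t × Fin Δ, if e = psi Δ t q.1 (q.2, q.2) then wt Δ q.2 else 0

lemma fup_psi_diag {Δ t : ℕ} (i : Fin t) (x : Fin Δ) :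
    fup Δ t (psi Δ t i (x, x)) = wt Δ x := by
  rw [fup, Finset.sum_eq_single (i, x)]
  · simp
  · intro q _ hq
    rw [if_neg]
    intro h
    obtain ⟨h1, h2⟩ := psi_inj.mp h.symm
    exact hq (Prod.ext h1 (congrArg Prod.fst h2))
  · intro h; exact absurd (Finset.mem_univ _) h

lemma fup_eq_zero {Δ t : ℕ} (e : Sym2 (Fin t × (Fin Δ ⊕ Fin Δ)))
    (h : ∀ q : Fin t × Fin Δ, e ≠ psi Δ t q.1 (q.2, q.2)) : fup Δ t e = 0 := by
  rw [fup]
  exact Finset.sum_eq_zero fun q _ => if_neg (h q)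

lemma fup_le_two {Δ t : ℕ} (e : Sym2 (Fin t × (Fin Δ ⊕ Fin Δ))) : fup Δ t e ≤ 2 := by
  by_cases h : ∃ q : Fin t × Fin Δ, e = psi Δ t q.1 (q.2, q.2)
  · obtain ⟨q, rfl⟩ := h
    rw [fup_psi_diag, wt]
    split <;> omega
  · push_neg at h
    rw [fup_eq_zero e h]
    omega

lemma sum_wt {Δ : ℕ} (hΔ : 1 ≤ Δ) : ∑ x : Fin Δ, wt Δ x = 2 * Δ - 1 := by
  obtain ⟨Δ', rfl⟩ : ∃ Δ', Δ = Δ' + 1 := ⟨Δ - 1, by omega⟩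
  rw [Fin.sum_univ_castSucc]
  have h1 : wt (Δ' + 1) (Fin.last Δ') = 1 := by simp [wt]
  have h2 : ∀ x : Fin Δ', wt (Δ' + 1) x.castSucc = 2 := by
    intro x
    rw [wt, if_neg]
    simp only [Fin.coe_castSucc]
    omega
  rw [h1, Finset.sum_congr rfl (fun x _ => h2 x), Finset.sum_const, Finset.card_univ,
    Fintype.card_fin, smul_eq_mul]
  omega

lemma sum_fup {Δ t : ℕ} (hΔ : 1 ≤ Δ) :
    ∑ e : Sym2 (Fin t × (Fin Δ ⊕ Fin Δ)), fup Δ t e = (2 * Δ - 1) * t := by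
  unfold fup
  rw [Finset.sum_comm]
  have : ∀ q : Fin t × Fin Δ,
      (∑ e : Sym2 (Fin t × (Fin Δ ⊕ Fin Δ)),
        if e = psi Δ t q.1 (q.2, q.2) then wt Δ q.2 else 0) = wt Δ q.2 := by
    intro q
    rw [Finset.sum_ite_eq' Finset.univ (psi Δ t q.1 (q.2, q.2)) (fun _ => wt Δ q.2)]
    simp
  rw [Finset.sum_congr rfl (fun q _ => this q), Fintype.sum_prod_type]
  simp [sum_wt hΔ, mul_comm]

lemma fup_rdf {Δ t : ℕ} : EdgeRDF (tKdd Δ t) (fup Δ t) := by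
  refine ⟨fun e => fup_le_two e, ?_, ?_⟩
  · intro e he
    refine fup_eq_zero e fun q hq => he ?_
    exact (mem_tKdd' e).mpr ⟨q.1, (q.2, q.2), hq⟩
  · intro e he h0
    obtain ⟨i, p, rfl⟩ := (mem_tKdd' e).mp he
    obtain ⟨x, y⟩ := p
    have hxy : x ≠ y := by
      rintro rfl
      rw [fup_psi_diag] at h0
      rw [wt] at h0
      split at h0 <;> omega
    by_cases hlast : x.val + 1 = Δ
    · have hylast : y.val + 1 ≠ Δ := by
        intro h
        exact hxy (Fin.ext (by omega))
      refine ⟨psi Δ t i (y, y), (mem_tKdd' _).mpr ⟨i, (y, y), rfl⟩, ?_, ?_,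
        (i, Sum.inr y), ?_, ?_⟩
      · rw [fup_psi_diag, wt, if_neg hylast]
      · intro h
        obtain ⟨-, h2⟩ := psi_inj.mp h
        exact hxy (congrArg Prod.fst h2).symm
      · rw [psi, Sym2.mem_iff]; right; rfl
      · rw [psi, Sym2.mem_iff]; right; rfl
    · refine ⟨psi Δ t i (x, x), (mem_tKdd' _).mpr ⟨i, (x, x), rfl⟩, ?_, ?_,
        (i, Sum.inl x), ?_, ?_⟩
      · rw [fup_psi_diag, wt, if_neg hlast]
      · intro h
        obtain ⟨-, h2⟩ := psi_inj.mp h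
        exact hxy (congrArg Prod.snd h2)
      · rw [psi, Sym2.mem_iff]; left; rfl
      · rw [psi, Sym2.mem_iff]; left; rfl

lemma lower_bound {Δ t : ℕ} (hΔ : 1 ≤ Δ) (f : Sym2 (Fin t × (Fin Δ ⊕ Fin Δ)) → ℕ)
    (hf : EdgeRDF (tKdd Δ t) f) : (2 * Δ - 1) * t ≤ ∑ e, f e := by
  classical
  have hcomp : ∀ i : Fin t, 2 * Δ - 1 ≤ ∑ p : Fin Δ × Fin Δ, f (psi Δ t i p) := by
    intro i
    refine key_count hΔ _ ?_
    intro p hp0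
    have hedge : psi Δ t i p ∈ (tKdd Δ t).edgeSet := (mem_tKdd' _).mpr ⟨i, p, rfl⟩
    obtain ⟨e', he', h2, hne, v, hv, hv'⟩ := hf.2.2 _ hedge hp0
    obtain ⟨j, q, rfl⟩ := (mem_tKdd' e').mp he'
    rw [psi, Sym2.mem_iff] at hv hv'
    rcases hv with rfl | rfl <;> rcases hv' with h | h <;>
      [skip; exact absurd (congrArg Prod.snd h) (by simp);
       exact absurd (congrArg Prod.snd h) (by simp); skip]
    · have hij : j = i := (congrArg Prod.fst h).symm
      have hq1 : q.1 = p.1 := Sum.inl.inj (congrArg Prod.snd h).symm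
      subst hij
      exact ⟨q, h2, Or.inl hq1⟩
    · have hij : j = i := (congrArg Prod.fst h).symm
      have hq2 : q.2 = p.2 := Sum.inr.inj (congrArg Prod.snd h).symm
      subst hij
      exact ⟨q, h2, Or.inr hq2⟩
  calc (2 * Δ - 1) * t = ∑ _i : Fin t, (2 * Δ - 1) := by
        rw [Finset.sum_const, Finset.card_univ, Fintype.card_fin, smul_eq_mul, mul_comm]
    _ ≤ ∑ i : Fin t, ∑ p : Fin Δ × Fin Δ, f (psi Δ t i p) :=
        Finset.sum_le_sum fun i _ => hcomp i
    _ = ∑ q : Fin t × (Fin Δ × Fin Δ), f (psi Δ t q.1 q.2) := by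
        rw [Fintype.sum_prod_type]
    _ = ∑ e ∈ Finset.univ.image (fun q : Fin t × (Fin Δ × Fin Δ) => psi Δ t q.1 q.2), f e := by
        rw [Finset.sum_image]
        intro a _ b _ hab
        obtain ⟨h1, h2⟩ := psi_inj.mp hab
        exact Prod.ext h1 h2
    _ ≤ ∑ e, f e := Finset.sum_le_sum_of_subset (Finset.subset_univ _)

/-- For `Δ ≥ 1` and `t ≥ 1`, the disjoint union of `t` copies of `K_{Δ,Δ}` has edge Roman
domination number exactly `(2Δ − 1)·t`; moreover for `Δ ≥ 2` this eventually exceeds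
`((2Δ − 2)/(2Δ − 1))·n + 2/(2Δ − 1)` (with `n = 2Δt`), so the connectivity hypothesis in
the corresponding bound for connected graphs is necessary. -/
theorem edgeRomanNumber_tKdd (Δ : ℕ) (hΔ : 1 ≤ Δ) :
    (∀ t, 1 ≤ t →
      edgeRomanNumber (Fin t × (Fin Δ ⊕ Fin Δ)) (tKdd Δ t) = (2 * Δ - 1) * t) ∧
    (2 ≤ Δ → ∃ t₀ : ℕ, ∀ t, t₀ ≤ t →
      (((2 * Δ - 1) * t : ℕ) : ℝ) >
        (2 * Δ - 2 : ℝ) / (2 * Δ - 1) * (2 * Δ * t) + 2 / (2 * Δ - 1)) := by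
  constructor
  · intro t ht
    have hmem : ((2 * Δ - 1) * t) ∈
        {w | ∃ f : Sym2 (Fin t × (Fin Δ ⊕ Fin Δ)) → ℕ, EdgeRDF (tKdd Δ t) f ∧
          w = ∑ e : Sym2 (Fin t × (Fin Δ ⊕ Fin Δ)), f e} :=
      ⟨fup Δ t, fup_rdf, (sum_fup hΔ).symm⟩
    refine le_antisymm (Nat.sInf_le hmem) (le_csInf ⟨_, hmem⟩ ?_)
    rintro w ⟨f, hf, rfl⟩
    exact lower_bound hΔ f hf
  · intro hΔ2
    refine ⟨3, fun t ht => ?_⟩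
    have h2Δ : (2 : ℝ) ≤ (Δ : ℝ) := by exact_mod_cast hΔ2
    have ht3 : (3 : ℝ) ≤ (t : ℝ) := by exact_mod_cast ht
    have hpos : (0 : ℝ) < 2 * (Δ : ℝ) - 1 := by linarith
    have hcast : (((2 * Δ - 1) * t : ℕ) : ℝ) = (2 * (Δ : ℝ) - 1) * (t : ℝ) := by
      rw [Nat.cast_mul, Nat.cast_sub (by omega : (1 : ℕ) ≤ 2 * Δ)]
      push_cast
      ring
    rw [hcast, gt_iff_lt, div_mul_eq_mul_div, ← add_div, div_lt_iff₀ hpos]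
    have hkey : (2 * (Δ : ℝ) - 1) * t * (2 * Δ - 1) -
        ((2 * Δ - 2) * (2 * Δ * t) + 2) = t - 2 := by ring
    linarith
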